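/- For the hybrid periodic system x^ΔΔ + p(t)x^Δ + x = 0 on the 2π-periodic time scale 𝕋 = ⋃_{k∈ℤ} [2kπ, (2k+1)π], where p(t) = 0 on [2kπ, (2k+1)π) and p((2k+1)π) = 1/4, the trace of the monodromy matrix over one period is 𝒜 = π/4 − 2 and its determinant is ℬ = π² − π/4 + 1; since |𝒜/2 ± √((𝒜/2)² − ℬ)| = √ℬ > 1, the system is unstable. -/

import Mathlib

open Matrix

/-- System matrix on the continuous part `[2kπ, (2k+1)π)`, where `p = 0`. -/
noncomputable def Acont : Matrix (Fin 2) (Fin 2) ℝ := !![0, 1; -1, 0]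

/-- System matrix at the scattered point `(2k+1)π`, where `p = 1/4`. -/
noncomputable def Ascat : Matrix (Fin 2) (Fin 2) ℝ := !![0, 1; -1, -(1/4)]

open Set in
lemma ode_unique (f g : ℝ → ℝ)
    (hf : ∀ t ∈ Icc (0:ℝ) Real.pi, HasDerivWithinAt f (g t) (Icc 0 Real.pi) t)
    (hg : ∀ t ∈ Icc (0:ℝ) Real.pi, HasDerivWithinAt g (-f t) (Icc 0 Real.pi) t) :
    f Real.pi = -f 0 ∧ g Real.pi = -g 0 := by
  set a := f 0 with ha
  set b := g 0 with hb
  set u : ℝ → ℝ := fun t => f t - (a * Real.cos t + b * Real.sin t) with hu_def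
  set v : ℝ → ℝ := fun t => g t - (-(a * Real.sin t) + b * Real.cos t) with hv_def
  have hu : ∀ t ∈ Icc (0:ℝ) Real.pi, HasDerivWithinAt u (v t) (Icc 0 Real.pi) t := by
    intro t ht
    have h2 : HasDerivWithinAt (fun t => a * Real.cos t + b * Real.sin t)
        (-(a * Real.sin t) + b * Real.cos t) (Icc 0 Real.pi) t := by
      have := (((Real.hasDerivAt_cos t).const_mul a).add
        ((Real.hasDerivAt_sin t).const_mul b)).hasDerivWithinAt (s := Icc 0 Real.pi)
      exact this.congr_deriv (by ring)
    have := (hf t ht).sub h2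
    exact this
  have hv : ∀ t ∈ Icc (0:ℝ) Real.pi, HasDerivWithinAt v (-u t) (Icc 0 Real.pi) t := by
    intro t ht
    have h2 : HasDerivWithinAt (fun t => -(a * Real.sin t) + b * Real.cos t)
        (-(a * Real.cos t) + -(b * Real.sin t)) (Icc 0 Real.pi) t := by
      have := (((Real.hasDerivAt_sin t).const_mul a).neg.add
        ((Real.hasDerivAt_cos t).const_mul b)).hasDerivWithinAt (s := Icc 0 Real.pi)
      exact this.congr_deriv (by ring)
    have := (hg t ht).sub h2
    exact this.congr_deriv (by simp only [hu_def]; ring)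
  set E : ℝ → ℝ := fun t => u t ^ 2 + v t ^ 2 with hE_def
  have hE : ∀ t ∈ Icc (0:ℝ) Real.pi, HasDerivWithinAt E 0 (Icc 0 Real.pi) t := by
    intro t ht
    have := ((hu t ht).pow 2).add ((hv t ht).pow 2)
    exact this.congr_deriv (by simp only [Nat.cast_ofNat, Nat.add_one_sub_one, pow_one]; ring)
  have hconst : ∀ t ∈ Icc (0:ℝ) Real.pi, E t = E 0 := by
    apply constant_of_has_deriv_right_zero
    · intro t ht; exact (hE t ht).continuousWithinAt
    · intro t ht
      exact (hE t (Ico_subset_Icc_self ht)).mono_of_mem_nhdsWithin (Icc_mem_nhdsGE_of_mem ⟨ht.1, ht.2⟩)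
  have hE0 : E 0 = 0 := by simp [hE_def, hu_def, hv_def, ← ha, ← hb]
  have hEpi : E Real.pi = 0 := by
    rw [hconst Real.pi ⟨Real.pi_pos.le, le_rfl⟩, hE0]
  have h1 : u Real.pi = 0 ∧ v Real.pi = 0 := by
    simp only [hE_def] at hEpi
    constructor <;> nlinarith [sq_nonneg (u Real.pi), sq_nonneg (v Real.pi)]
  obtain ⟨h1, h2⟩ := h1
  simp only [hu_def, hv_def, Real.cos_pi, Real.sin_pi] at h1 h2
  constructor <;> linarith

/-- For the hybrid system `x^ΔΔ + p x^Δ + x = 0` on `𝕋 = ⋃ₖ [2kπ, (2k+1)π]` with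
`p = 0` on `[2kπ,(2k+1)π)` and `p((2k+1)π) = 1/4`: the fundamental solution `Φ`
(with `Φ(0) = I`) satisfies `Φ' = Acont Φ` on `[0,π]` and the scattered-point jump
`Φ(2π) = Φ(π) + π (Ascat Φ(π))` (graininess `μ(π) = π`).  Its monodromy matrix has
trace `𝒜 = π/4 - 2` and determinant `ℬ = π² - π/4 + 1`; every Floquet multiplier
has modulus `√ℬ > 1`, so the system is unstable. -/
theorem hybrid_example_unstable (Φ : ℝ → Matrix (Fin 2) (Fin 2) ℝ)
    (hΦ0 : Φ 0 = 1)
    (hode : ∀ t ∈ Set.Icc (0 : ℝ) Real.pi, ∀ i j,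
      HasDerivWithinAt (fun u => Φ u i j) ((Acont * Φ t) i j) (Set.Icc 0 Real.pi) t)
    (hjump : Φ (2 * Real.pi) = Φ Real.pi + Real.pi • (Ascat * Φ Real.pi)) :
    (Φ (2 * Real.pi)).trace = Real.pi / 4 - 2 ∧
    (Φ (2 * Real.pi)).det = Real.pi ^ 2 - Real.pi / 4 + 1 ∧
    (∀ ρ : ℂ, ρ ^ 2 - ((Φ (2 * Real.pi)).trace : ℂ) * ρ
        + ((Φ (2 * Real.pi)).det : ℂ) = 0 →
      ‖ρ‖ = Real.sqrt ((Φ (2 * Real.pi)).det)) ∧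
    1 < Real.sqrt ((Φ (2 * Real.pi)).det) := by
  -- value of Φ at π
  have key : ∀ j, Φ Real.pi 0 j = -(Φ 0 0 j) ∧ Φ Real.pi 1 j = -(Φ 0 1 j) := by
    intro j
    apply ode_unique (fun u => Φ u 0 j) (fun u => Φ u 1 j)
    · intro t ht
      have := hode t ht 0 j
      convert this using 1
      simp [Acont, Matrix.mul_apply, Fin.sum_univ_two]
    · intro t ht
      have := hode t ht 1 j
      convert this using 1
      simp [Acont, Matrix.mul_apply, Fin.sum_univ_two]
  have hΦpi : Φ Real.pi = !![-1, 0; 0, -1] := by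
    have h0 := key 0
    have h1 := key 1
    rw [hΦ0] at h0 h1
    ext i j
    fin_cases i <;> fin_cases j <;>
      simp_all [Matrix.one_apply]
  have hM : Φ (2 * Real.pi) = !![-1, -Real.pi; Real.pi, -1 + Real.pi/4] := by
    rw [hjump, hΦpi]
    ext i j
    fin_cases i <;> fin_cases j <;>
      simp [Ascat, Matrix.mul_apply, Fin.sum_univ_two] <;> ring
  have htr : (Φ (2 * Real.pi)).trace = Real.pi / 4 - 2 := by
    rw [hM, Matrix.trace_fin_two]; simp; ring
  have hdet : (Φ (2 * Real.pi)).det = Real.pi ^ 2 - Real.pi / 4 + 1 := by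
    rw [hM, Matrix.det_fin_two]; simp; ring
  refine ⟨htr, hdet, ?_, ?_⟩
  · intro ρ hρ
    rw [htr, hdet] at hρ
    rw [hdet]
    have hpi := Real.pi_gt_three
    have hre := congrArg Complex.re hρ
    have him := congrArg Complex.im hρ
    simp [Complex.add_re, Complex.sub_re, Complex.mul_re, Complex.mul_im, pow_two,
      Complex.add_im, Complex.sub_im, Complex.ofReal_re, Complex.ofReal_im] at hre him
    have habs : ‖ρ‖ = Real.sqrt (ρ.re^2 + ρ.im^2) := by
      rw [Complex.norm_def, Complex.normSq_apply]; ring_nf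
    have hxy : ρ.re^2 + ρ.im^2 = Real.pi ^ 2 - Real.pi / 4 + 1 := by
      rcases eq_or_ne ρ.im 0 with hy0 | hy0
      · exfalso
        rw [hy0] at hre
        nlinarith [sq_nonneg (ρ.re - (Real.pi/4 - 2)/2), sq_nonneg Real.pi]
      · have hxA : ρ.re = (Real.pi/4 - 2)/2 := by
          have h2 : ρ.im * (2*ρ.re - (Real.pi/4 - 2)) = 0 := by nlinarith
          rcases mul_eq_zero.1 h2 with h | h
          · exact absurd h hy0
          · linarith
        nlinarith
    rw [habs, hxy]
  · rw [hdet]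
    have hpi := Real.pi_gt_three
    have h1 : (1:ℝ)^2 < Real.pi ^ 2 - Real.pi / 4 + 1 := by nlinarith
    exact (Real.lt_sqrt (by norm_num)).2 h1
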